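/- If L_X is T-complete for every object X (equivalently D(⊕ × id) is always T-complete), then the functor L : C → T-Sys_F (sending X to the coalgebra L_X) is left adjoint to the forgetful functor U : T-Sys_F → C, with unit of the adjunction given by 0_⊕ × id_B : B → T × B. -/

import Mathlib

open CategoryTheory CategoryTheory.Limits

universe v u

/-- The data of a monoidal setting for dynamic stability, without the monoid
structure on the time object: an endofunctor `F` with a laxator `ψ` (axiom D5),
stationary systems `0` (axiom D6), a time object `T` with a distinguished point
`e = 0_⊕` and a unit-clock coalgebra `1_T : T ⟶ F T`. -/
structure PreSetting (C : Type u) [Category.{v} C] [HasFiniteProducts C] where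
  /-- the endofunctor -/
  F : C ⥤ C
  /-- the laxator (axiom D5) -/
  ψ : ∀ A B : C, F.obj A ⨯ F.obj B ⟶ F.obj (A ⨯ B)
  ψ_nat : ∀ {A A' B B' : C} (u : A ⟶ A') (w : B ⟶ B'),
    prod.map (F.map u) (F.map w) ≫ ψ A' B' = ψ A B ≫ F.map (prod.map u w)
  ψ_assoc : ∀ A B D : C,
    prod.map (ψ A B) (𝟙 (F.obj D)) ≫ ψ (A ⨯ B) D ≫
        F.map (prod.associator A B D).hom =
      (prod.associator (F.obj A) (F.obj B) (F.obj D)).hom ≫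
        prod.map (𝟙 (F.obj A)) (ψ B D) ≫ ψ A (B ⨯ D)
  /-- stationary systems (axiom D6) -/
  z : ∀ A : C, A ⟶ F.obj A
  z_nat : ∀ {A B : C} (u : A ⟶ B), z A ≫ F.map u = u ≫ z B
  z_mul : ∀ A B : C, prod.map (z A) (z B) ≫ ψ A B = z (A ⨯ B)
  /-- the time object -/
  T : C
  /-- the point `0_⊕` of the time object -/
  e : ⊤_ C ⟶ T
  /-- the unit clock coalgebra -/
  oneT : T ⟶ F.obj T

namespace PreSetting

variable {C : Type u} [Category.{v} C] [HasFiniteProducts C] (S : PreSetting C)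

/-- The coalgebra `L_X := ψ_{T,X} ∘ (1_T × 0_X) : T ⨯ X ⟶ F (T ⨯ X)`. -/
noncomputable def L (X : C) : S.T ⨯ X ⟶ S.F.obj (S.T ⨯ X) :=
  prod.map S.oneT (S.z X) ≫ S.ψ S.T X

/-- The initial-condition inclusion `0_⊕ × id_X : X ⟶ T ⨯ X`. -/
noncomputable def ins (X : C) : X ⟶ S.T ⨯ X :=
  prod.lift (terminal.from X ≫ S.e) (𝟙 X)

/-- `p` is a morphism of `F`-coalgebras from `(A, f)` to `(B, g)`. -/
def IsCoalgHom {A B : C} (f : A ⟶ S.F.obj A) (g : B ⟶ S.F.obj B)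
    (p : A ⟶ B) : Prop :=
  f ≫ S.F.map p = p ≫ g

/-- The derivative of a flow `φ : T ⨯ E ⟶ E`:
`Dφ := Fφ ∘ L_E ∘ (0_⊕ × id_E)`. -/
noncomputable def deriv {E : C} (φ : S.T ⨯ E ⟶ E) : E ⟶ S.F.obj E :=
  S.ins E ≫ S.L E ≫ S.F.map φ

/-- `T`-completeness of a coalgebra `(A, f)`: every `g : B ⟶ A` extends to a
unique coalgebra morphism `γ : L_B ⟶ f` with initial condition `g`. -/
def TComplete {A : C} (f : A ⟶ S.F.obj A) : Prop :=
  ∀ {B : C} (g : B ⟶ A), ∃! γ : S.T ⨯ B ⟶ A,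
    S.IsCoalgHom (S.L B) f γ ∧ S.ins B ≫ γ = g

end PreSetting

/-- A monoidal setting for dynamic stability: a `PreSetting` together with a
monoid structure `(T, ⊕, 0_⊕)` on the time object. -/
structure DynSetting (C : Type u) [Category.{v} C] [HasFiniteProducts C]
    extends PreSetting C where
  /-- the monoid operation `⊕` on the time object -/
  mul : T ⨯ T ⟶ T
  mul_one : prod.lift (𝟙 T) (terminal.from T ≫ e) ≫ mul = 𝟙 T
  one_mul : prod.lift (terminal.from T ≫ e) (𝟙 T) ≫ mul = 𝟙 T
  mul_assoc : (prod.associator T T T).inv ≫ prod.map mul (𝟙 T) ≫ mul =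
    prod.map (𝟙 T) mul ≫ mul

namespace DynSetting

variable {C : Type u} [Category.{v} C] [HasFiniteProducts C] (S : DynSetting C)

/-- `φ : T ⨯ E ⟶ E` is a `T`-flow (monoid action). -/
def IsFlow {E : C} (φ : S.T ⨯ E ⟶ E) : Prop :=
  S.ins E ≫ φ = 𝟙 E ∧
    prod.map (𝟙 S.T) φ ≫ φ =
      (prod.associator S.T S.T E).inv ≫ prod.map S.mul (𝟙 E) ≫ φ

/-- Compatibility of the unit clock with the monoid structure:
`F(⊕) ∘ L_T = 1_T ∘ ⊕`. -/
def ClockCompat : Prop :=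
  S.L S.T ≫ S.F.map S.mul = S.mul ≫ S.oneT

end DynSetting

section AuxLemmas

variable {C : Type u} [Category.{v} C] [HasFiniteProducts C] (S : PreSetting C)

/-- The chosen extension provided by `T`-completeness. -/
noncomputable def PreSetting.lift {A B : C} {f : A ⟶ S.F.obj A}
    (hf : S.TComplete f) (g : B ⟶ A) : S.T ⨯ B ⟶ A :=
  (hf g).choose

lemma PreSetting.lift_hom {A B : C} {f : A ⟶ S.F.obj A}
    (hf : S.TComplete f) (g : B ⟶ A) :
    S.IsCoalgHom (S.L B) f (S.lift hf g) :=
  (hf g).choose_spec.1.1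

lemma PreSetting.lift_ins {A B : C} {f : A ⟶ S.F.obj A}
    (hf : S.TComplete f) (g : B ⟶ A) :
    S.ins B ≫ S.lift hf g = g :=
  (hf g).choose_spec.1.2

lemma PreSetting.lift_unique {A B : C} {f : A ⟶ S.F.obj A}
    (hf : S.TComplete f) (g : B ⟶ A) (γ : S.T ⨯ B ⟶ A)
    (h1 : S.IsCoalgHom (S.L B) f γ) (h2 : S.ins B ≫ γ = g) :
    γ = S.lift hf g :=
  (hf g).choose_spec.2 γ ⟨h1, h2⟩

lemma PreSetting.isCoalgHom_comp {A B D : C} {f : A ⟶ S.F.obj A}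
    {g : B ⟶ S.F.obj B} {h : D ⟶ S.F.obj D} {p : A ⟶ B} {q : B ⟶ D}
    (h1 : S.IsCoalgHom f g p) (h2 : S.IsCoalgHom g h q) :
    S.IsCoalgHom f h (p ≫ q) := by
  unfold PreSetting.IsCoalgHom at *
  rw [S.F.map_comp, ← Category.assoc, h1, Category.assoc, h2, ← Category.assoc]

/-- The free functor `L : C ⥤ T-Sys_F`. -/
noncomputable def PreSetting.LFunctor (hLcomp : ∀ X : C, S.TComplete (S.L X)) :
    C ⥤ ObjectProperty.FullSubcategory
      (fun A : Endofunctor.Coalgebra S.F => S.TComplete A.str) where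
  obj X := ⟨⟨S.T ⨯ X, S.L X⟩, hLcomp X⟩
  map {X Y} u := ObjectProperty.homMk ⟨S.lift (hLcomp Y) (u ≫ S.ins Y), S.lift_hom (hLcomp Y) (u ≫ S.ins Y)⟩
  map_id X := by
    apply ObjectProperty.hom_ext
    apply Endofunctor.Coalgebra.Hom.ext
    exact (S.lift_unique (hLcomp X) _ (𝟙 _)
      (by simp [PreSetting.IsCoalgHom]) (by simp)).symm
  map_comp {X Y Z} u v := by
    apply ObjectProperty.hom_ext
    apply Endofunctor.Coalgebra.Hom.ext
    refine (S.lift_unique (hLcomp Z) _ _ ?_ ?_).symm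
    · exact S.isCoalgHom_comp (S.lift_hom (hLcomp Y) _) (S.lift_hom (hLcomp Z) _)
    · show S.ins X ≫ S.lift (hLcomp Y) (u ≫ S.ins Y) ≫ S.lift (hLcomp Z) (v ≫ S.ins Z) = _
      rw [← Category.assoc, S.lift_ins, Category.assoc, S.lift_ins, ← Category.assoc]

/-- The hom-set equivalence of the free–forgetful adjunction. -/
noncomputable def PreSetting.coreHomEquiv (hLcomp : ∀ X : C, S.TComplete (S.L X)) :
    Adjunction.CoreHomEquiv (S.LFunctor hLcomp)
      (ObjectProperty.ι _ ⋙ Endofunctor.Coalgebra.forget S.F) where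
  homEquiv X Y :=
    { toFun := fun γ => S.ins X ≫ γ.hom.f
      invFun := fun g => ObjectProperty.homMk ⟨S.lift Y.property g, S.lift_hom Y.property g⟩
      left_inv := fun γ => by
        apply ObjectProperty.hom_ext
        apply Endofunctor.Coalgebra.Hom.ext
        exact (S.lift_unique Y.property _ γ.hom.f γ.hom.h rfl).symm
      right_inv := fun g => S.lift_ins Y.property g }
  homEquiv_naturality_left_symm := by
    intro X' X Y f g
    apply ObjectProperty.hom_ext
    apply Endofunctor.Coalgebra.Hom.ext
    refine (S.lift_unique Y.property _ _ ?_ ?_).symm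
    · exact S.isCoalgHom_comp (S.lift_hom (hLcomp X) _) (S.lift_hom Y.property _)
    · show S.ins X' ≫ S.lift (hLcomp X) (f ≫ S.ins X) ≫ S.lift Y.property g = _
      rw [← Category.assoc, S.lift_ins, Category.assoc]
      exact congrArg (f ≫ ·) (S.lift_ins Y.property g)
  homEquiv_naturality_right := by
    intro X Y Y' f g
    show S.ins X ≫ (f ≫ g).hom.f = (S.ins X ≫ f.hom.f) ≫ g.hom.f
    exact (Category.assoc _ _ _).symm

end AuxLemmas

/-- **The free–forgetful adjunction `L ⊣ U`.** If `L_X` is `T`-complete for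
every object `X`, then the functor `L : C ⥤ T‑Sys_F` sending `X` to the
coalgebra `L_X` on `T ⨯ X` is left adjoint to the forgetful functor
`U : T‑Sys_F ⥤ C` from the full subcategory of `T`-complete coalgebras, with
the unit of the adjunction given by `0_⊕ × id_B : B ⟶ T ⨯ B`. -/


theorem L_left_adjoint_forget {C : Type u} [Category.{v} C]
    [HasFiniteProducts C] (S : PreSetting C)
    (hLcomp : ∀ X : C, S.TComplete (S.L X)) :
    ∃ (Lf : C ⥤ ObjectProperty.FullSubcategory
        (fun A : Endofunctor.Coalgebra S.F => S.TComplete A.str))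
      (adj : Lf ⊣ ObjectProperty.ι _ ⋙ Endofunctor.Coalgebra.forget S.F),
      (∀ X : C, Lf.obj X = ⟨⟨S.T ⨯ X, S.L X⟩, hLcomp X⟩) ∧
      ∀ B : C, HEq (adj.unit.app B) (S.ins B) := by
  refine ⟨S.LFunctor hLcomp, Adjunction.mkOfHomEquiv (S.coreHomEquiv hLcomp),
    fun X => rfl, fun B => heq_of_eq ?_⟩
  show (S.coreHomEquiv hLcomp).homEquiv B _ (𝟙 _) = S.ins B
  simp only [PreSetting.coreHomEquiv, Equiv.coe_fn_mk]
  exact Category.comp_id _
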